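/- Let |W⟩ = (|100⟩ + |010⟩ + |001⟩)/√3 in ℂ² ⊗ ℂ² ⊗ ℂ², and let {e₁ = x|0⟩ + y|1⟩, e₂ = ȳ|0⟩ − x̄|1⟩} (with |x|² + |y|² = 1) be an orthonormal basis of the first qubit. If the first qubit is measured in this basis, then: (a) the outcome e₁ occurs with probability (1 + |x|²)/3 and the outcome e₂ with probability (2 − |x|²)/3; (b) the single-qubit reduced density matrix of the conditional state of the remaining two qubits given outcome e₁ has eigenvalues 1/2 ± √(−3|x|⁴ + 2|x|² + 1)/(2 + 2|x|²); (c) given outcome e₂ it has eigenvalues 1/2 ± √(4|x|² − 3|x|⁴)/(4 − 2|x|²). -/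

import Mathlib

open Matrix Polynomial

/-- The three-qubit W state vector `(|100⟩ + |010⟩ + |001⟩)/√3`. -/
noncomputable def wVec : Fin 2 × Fin 2 × Fin 2 → ℂ := fun t =>
  if t = (1, 0, 0) ∨ t = (0, 1, 0) ∨ t = (0, 0, 1) then ((1 / Real.sqrt 3 : ℝ) : ℂ) else 0

/-- The (unnormalized) conditional state of the last two qubits after measuring the first qubit
of `ψ` with outcome `w`. -/
noncomputable def condVec3 (ψ : Fin 2 × Fin 2 × Fin 2 → ℂ) (w : Fin 2 → ℂ) :
    Fin 2 × Fin 2 → ℂ := fun bc => ∑ a, star (w a) * ψ (a, bc.1, bc.2)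

/-- The reduced density matrix of the first qubit of a two-qubit pure state `φ`. -/
noncomputable def reducedFst (φ : Fin 2 × Fin 2 → ℂ) : Matrix (Fin 2) (Fin 2) ℂ :=
  fun b b' => ∑ c, φ (b, c) * star (φ (b', c))

lemma mul_star_self' (z : ℂ) : z * star z = ((‖z‖^2:ℝ):ℂ) := by
  rw [Complex.star_def, Complex.mul_conj']; push_cast; ring

theorem charpoly2 (M : Matrix (Fin 2) (Fin 2) ℂ) (a b : ℂ)
    (htr : M 0 0 + M 1 1 = a + b) (hdet : M 0 0 * M 1 1 - M 0 1 * M 1 0 = a*b) :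
    M.charpoly = (X - C a)*(X - C b) := by
  rw [Matrix.charpoly, Matrix.det_fin_two, charmatrix_apply_eq, charmatrix_apply_eq,
    charmatrix_apply_ne _ _ _ (by decide), charmatrix_apply_ne _ _ _ (by decide)]
  have : (X - C (M 0 0)) * (X - C (M 1 1)) - -C (M 0 1) * -C (M 1 0)
      = X^2 - C (M 0 0 + M 1 1) * X + C (M 0 0 * M 1 1 - M 0 1 * M 1 0) := by
    simp only [map_sub (C : ℂ →+* ℂ[X]), _root_.map_mul (C : ℂ →+* ℂ[X]),
      map_add (C : ℂ →+* ℂ[X])]; ring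
  rw [this, htr, hdet]
  simp only [map_add (C : ℂ →+* ℂ[X]), _root_.map_mul (C : ℂ →+* ℂ[X])]; ring

set_option maxHeartbeats 1000000 in
/-- measuring the first qubit of the W state in the basis
`{e₁ = x|0⟩+y|1⟩, e₂ = ȳ|0⟩−x̄|1⟩}`: (a) the outcomes occur with probabilities `(1+|x|²)/3` and
`(2−|x|²)/3`; (b),(c) the single-qubit reduced density matrices of the normalized conditional
states have the indicated eigenvalues. -/
theorem w_state_measurement_probabilities_and_conditional_spectra
    (x y : ℂ) (hxy : ‖x‖ ^ 2 + ‖y‖ ^ 2 = 1)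
    (e : Fin 2 → (Fin 2 → ℂ))
    (he1 : e 0 = fun a => if a = 0 then x else y)
    (he2 : e 1 = fun a => if a = 0 then star y else -star x)
    (p : Fin 2 → ℝ) (hp : ∀ i, p i = ∑ bc, ‖condVec3 wVec (e i) bc‖ ^ 2)
    (φ : Fin 2 → (Fin 2 × Fin 2 → ℂ))
    (hφ : ∀ i bc, φ i bc = condVec3 wVec (e i) bc / ((Real.sqrt (p i) : ℝ) : ℂ)) :
    (p 0 = (1 + ‖x‖ ^ 2) / 3 ∧ p 1 = (2 - ‖x‖ ^ 2) / 3)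
    ∧ (reducedFst (φ 0)).charpoly =
        (X - C ((1 / 2 + Real.sqrt (-3 * ‖x‖ ^ 4 + 2 * ‖x‖ ^ 2 + 1) / (2 + 2 * ‖x‖ ^ 2) : ℝ) : ℂ)) *
        (X - C ((1 / 2 - Real.sqrt (-3 * ‖x‖ ^ 4 + 2 * ‖x‖ ^ 2 + 1) / (2 + 2 * ‖x‖ ^ 2) : ℝ) : ℂ))
    ∧ (reducedFst (φ 1)).charpoly =
        (X - C ((1 / 2 + Real.sqrt (4 * ‖x‖ ^ 2 - 3 * ‖x‖ ^ 4) / (4 - 2 * ‖x‖ ^ 2) : ℝ) : ℂ)) *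
        (X - C ((1 / 2 - Real.sqrt (4 * ‖x‖ ^ 2 - 3 * ‖x‖ ^ 4) / (4 - 2 * ‖x‖ ^ 2) : ℝ) : ℂ)) := by
  obtain ⟨r, hr⟩ : ∃ r, ‖x‖ = r := ⟨_, rfl⟩
  rw [hr] at hxy ⊢
  have ht0 : 0 ≤ r ^ 2 := by positivity
  have ht1 : r ^ 2 ≤ 1 := by nlinarith [sq_nonneg ‖y‖]
  have hy : ‖y‖ ^ 2 = 1 - r ^ 2 := by linarith
  have hknorm : ‖((1 / Real.sqrt 3 : ℝ) : ℂ)‖ ^ 2 = 1/3 := by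
    rw [Complex.norm_real, Real.norm_eq_abs, abs_of_nonneg (by positivity), div_pow,
      Real.sq_sqrt (by norm_num)]
    norm_num
  -- conditional vectors
  have c00 : condVec3 wVec (e 0) (0,0) = star y * ((1 / Real.sqrt 3 : ℝ) : ℂ) := by
    simp [condVec3, wVec, he1, Fin.sum_univ_two, Prod.ext_iff]
  have c01 : condVec3 wVec (e 0) (0,1) = star x * ((1 / Real.sqrt 3 : ℝ) : ℂ) := by
    simp [condVec3, wVec, he1, Fin.sum_univ_two, Prod.ext_iff]
  have c10 : condVec3 wVec (e 0) (1,0) = star x * ((1 / Real.sqrt 3 : ℝ) : ℂ) := by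
    simp [condVec3, wVec, he1, Fin.sum_univ_two, Prod.ext_iff]
  have c11 : condVec3 wVec (e 0) (1,1) = 0 := by
    simp [condVec3, wVec, he1, Fin.sum_univ_two, Prod.ext_iff]
  have d00 : condVec3 wVec (e 1) (0,0) = -x * ((1 / Real.sqrt 3 : ℝ) : ℂ) := by
    simp [condVec3, wVec, he2, Fin.sum_univ_two, Prod.ext_iff]
  have d01 : condVec3 wVec (e 1) (0,1) = y * ((1 / Real.sqrt 3 : ℝ) : ℂ) := by
    simp [condVec3, wVec, he2, Fin.sum_univ_two, Prod.ext_iff]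
  have d10 : condVec3 wVec (e 1) (1,0) = y * ((1 / Real.sqrt 3 : ℝ) : ℂ) := by
    simp [condVec3, wVec, he2, Fin.sum_univ_two, Prod.ext_iff]
  have d11 : condVec3 wVec (e 1) (1,1) = 0 := by
    simp [condVec3, wVec, he2, Fin.sum_univ_two, Prod.ext_iff]
  -- probabilities
  have hp0 : p 0 = (1 + r ^ 2) / 3 := by
    rw [hp 0, Fintype.sum_prod_type, Fin.sum_univ_two, Fin.sum_univ_two, Fin.sum_univ_two,
      c00, c01, c10, c11]
    simp only [norm_mul, norm_star, mul_pow, norm_zero]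
    rw [hknorm, hy, hr]; ring
  have hp1 : p 1 = (2 - r ^ 2) / 3 := by
    rw [hp 1, Fintype.sum_prod_type, Fin.sum_univ_two, Fin.sum_univ_two, Fin.sum_univ_two,
      d00, d01, d10, d11]
    simp only [norm_mul, norm_neg, mul_pow, norm_zero]
    rw [hknorm, hy, hr]; ring
  have hstark : star ((1 / Real.sqrt 3 : ℝ) : ℂ) = ((1 / Real.sqrt 3 : ℝ) : ℂ) := by
    rw [Complex.star_def, Complex.conj_ofReal]
  have hkk : ((1 / Real.sqrt 3 : ℝ) : ℂ) * ((1 / Real.sqrt 3 : ℝ) : ℂ) = (((1:ℝ)/3 : ℝ) : ℂ) := by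
    norm_cast
    rw [div_mul_div_comm, Real.mul_self_sqrt (by norm_num)]; norm_num
  have hxx : x * star x = ((r ^ 2 : ℝ) : ℂ) := by rw [mul_star_self' x, hr]
  have hyy : star y * y = (((1:ℝ) - r ^ 2 : ℝ) : ℂ) := by
    rw [show star y * y = y * star y from mul_comm _ _, mul_star_self' y, hy]
  refine ⟨⟨by rw [hp0], by rw [hp1]⟩, ?_, ?_⟩
  · -- case 0
    have hppos : 0 < p 0 := by rw [hp0]; linarith
    have hq : ((Real.sqrt (p 0) : ℝ) : ℂ) * ((Real.sqrt (p 0) : ℝ) : ℂ) = ((p 0 : ℝ) : ℂ) := by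
      norm_cast; exact Real.mul_self_sqrt hppos.le
    have hdiv : ∀ z w : ℂ, (z / ((Real.sqrt (p 0) : ℝ) : ℂ)) * star (w / ((Real.sqrt (p 0) : ℝ) : ℂ))
        = z * star w / ((p 0 : ℝ) : ℂ) := by
      intro z w
      rw [star_div₀, div_mul_div_comm, ← hq]
      congr 1
      rw [Complex.star_def, Complex.conj_ofReal]
    have M00 : reducedFst (φ 0) 0 0
        = (((1 - r ^ 2)/3/(p 0) + r ^ 2/3/(p 0) : ℝ) : ℂ) := by
      simp only [reducedFst, Fin.sum_univ_two, hφ, c00, c01, hdiv, mul_star_self',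
        norm_mul, norm_star, mul_pow, hknorm, hy, hr]
      push_cast; ring
    have M11 : reducedFst (φ 0) 1 1 = ((r ^ 2/3/(p 0) : ℝ) : ℂ) := by
      simp only [reducedFst, Fin.sum_univ_two, hφ, c10, c11, hdiv, mul_star_self',
        norm_mul, norm_star, mul_pow, hknorm, norm_zero, hr]
      push_cast; ring
    have M01 : reducedFst (φ 0) 0 1 = star y * x * (((1:ℝ)/3/(p 0) : ℝ) : ℂ) := by
      simp only [reducedFst, Fin.sum_univ_two, hφ, c00, c01, c10, c11, hdiv,
        star_mul', hstark, star_star, star_zero]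
      rw [show star y * ((1 / Real.sqrt 3 : ℝ) : ℂ) * (x * ((1 / Real.sqrt 3 : ℝ) : ℂ))
          = star y * x * (((1 / Real.sqrt 3 : ℝ) : ℂ) * ((1 / Real.sqrt 3 : ℝ) : ℂ)) from by ring,
        hkk]
      push_cast; ring
    have M10 : reducedFst (φ 0) 1 0 = star x * y * (((1:ℝ)/3/(p 0) : ℝ) : ℂ) := by
      simp only [reducedFst, Fin.sum_univ_two, hφ, c00, c01, c10, c11, hdiv,
        star_mul', hstark, star_star, star_zero]
      rw [show star x * ((1 / Real.sqrt 3 : ℝ) : ℂ) * (y * ((1 / Real.sqrt 3 : ℝ) : ℂ))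
          = star x * y * (((1 / Real.sqrt 3 : ℝ) : ℂ) * ((1 / Real.sqrt 3 : ℝ) : ℂ)) from by ring,
        hkk]
      push_cast; ring
    refine charpoly2 _ _ _ ?_ ?_
    · rw [M00, M11]
      norm_cast
      rw [hp0]
      have h1 : (1:ℝ) + r ^ 2 ≠ 0 := by linarith
      field_simp
      ring
    · rw [M00, M11, M01, M10]
      rw [show star y * x * (((1:ℝ)/3/(p 0) : ℝ) : ℂ) * (star x * y * (((1:ℝ)/3/(p 0) : ℝ) : ℂ))
          = (star y * y) * (x * star x) * ((((1:ℝ)/3/(p 0) : ℝ) : ℂ) * (((1:ℝ)/3/(p 0) : ℝ) : ℂ))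
          from by ring, hyy, hxx]
      have key : (((1 - r ^ 2)/3/(p 0) + r ^ 2/3/(p 0)) * (r ^ 2/3/(p 0))
          - (1 - r ^ 2) * (r ^ 2) * ((1/3/(p 0)) * (1/3/(p 0))) : ℝ)
          = (1/2 + Real.sqrt (-3 * r ^ 4 + 2 * r ^ 2 + 1) / (2 + 2 * r ^ 2)) *
            (1/2 - Real.sqrt (-3 * r ^ 4 + 2 * r ^ 2 + 1) / (2 + 2 * r ^ 2)) := by
        rw [hp0]
        obtain ⟨S, hSeq⟩ : ∃ S, Real.sqrt (-3 * r ^ 4 + 2 * r ^ 2 + 1) = S := ⟨_, rfl⟩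
        rw [hSeq]
        have hs : S ^ 2 = -3 * r ^ 4 + 2 * r ^ 2 + 1 := by
          rw [← hSeq]; exact Real.sq_sqrt (by nlinarith)
        have h1 : (1:ℝ) + r ^ 2 ≠ 0 := by linarith
        have h2 : (2:ℝ) + 2 * r ^ 2 ≠ 0 := by linarith
        field_simp
        linear_combination hs
      exact_mod_cast key
  · -- case 1
    have hppos : 0 < p 1 := by rw [hp1]; linarith
    have hq : ((Real.sqrt (p 1) : ℝ) : ℂ) * ((Real.sqrt (p 1) : ℝ) : ℂ) = ((p 1 : ℝ) : ℂ) := by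
      norm_cast; exact Real.mul_self_sqrt hppos.le
    have hdiv : ∀ z w : ℂ, (z / ((Real.sqrt (p 1) : ℝ) : ℂ)) * star (w / ((Real.sqrt (p 1) : ℝ) : ℂ))
        = z * star w / ((p 1 : ℝ) : ℂ) := by
      intro z w
      rw [star_div₀, div_mul_div_comm, ← hq]
      congr 1
      rw [Complex.star_def, Complex.conj_ofReal]
    have M00 : reducedFst (φ 1) 0 0
        = ((r ^ 2/3/(p 1) + (1 - r ^ 2)/3/(p 1) : ℝ) : ℂ) := by
      simp only [reducedFst, Fin.sum_univ_two, hφ, d00, d01, hdiv, mul_star_self',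
        norm_mul, norm_neg, mul_pow, hknorm, hy, hr]
      push_cast; ring
    have M11 : reducedFst (φ 1) 1 1 = (((1 - r ^ 2)/3/(p 1) : ℝ) : ℂ) := by
      simp only [reducedFst, Fin.sum_univ_two, hφ, d10, d11, hdiv, mul_star_self',
        norm_mul, norm_neg, mul_pow, hknorm, norm_zero, hy, hr]
      push_cast; ring
    have M01 : reducedFst (φ 1) 0 1 = -x * star y * (((1:ℝ)/3/(p 1) : ℝ) : ℂ) := by
      simp only [reducedFst, Fin.sum_univ_two, hφ, d00, d01, d10, d11, hdiv,
        star_mul', hstark, star_star, star_zero]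
      rw [show -x * ((1 / Real.sqrt 3 : ℝ) : ℂ) * (star y * ((1 / Real.sqrt 3 : ℝ) : ℂ))
          = -x * star y * (((1 / Real.sqrt 3 : ℝ) : ℂ) * ((1 / Real.sqrt 3 : ℝ) : ℂ)) from by ring,
        hkk]
      push_cast; ring
    have M10 : reducedFst (φ 1) 1 0 = y * star (-x) * (((1:ℝ)/3/(p 1) : ℝ) : ℂ) := by
      simp only [reducedFst, Fin.sum_univ_two, hφ, d00, d01, d10, d11, hdiv,
        star_mul', hstark, star_star, star_zero]
      rw [show y * ((1 / Real.sqrt 3 : ℝ) : ℂ) * (star (-x) * ((1 / Real.sqrt 3 : ℝ) : ℂ))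
          = y * star (-x) * (((1 / Real.sqrt 3 : ℝ) : ℂ) * ((1 / Real.sqrt 3 : ℝ) : ℂ)) from by ring,
        hkk]
      push_cast; ring
    refine charpoly2 _ _ _ ?_ ?_
    · rw [M00, M11]
      norm_cast
      rw [hp1]
      have h1 : (2:ℝ) - r ^ 2 ≠ 0 := by
        have : (1:ℝ) ≤ 2 - r ^ 2 := by linarith
        linarith
      field_simp
      ring
    · rw [M00, M11, M01, M10]
      rw [show -x * star y * (((1:ℝ)/3/(p 1) : ℝ) : ℂ) * (y * star (-x) * (((1:ℝ)/3/(p 1) : ℝ) : ℂ))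
          = (star y * y) * (x * star x) * ((((1:ℝ)/3/(p 1) : ℝ) : ℂ) * (((1:ℝ)/3/(p 1) : ℝ) : ℂ))
          from by rw [star_neg]; ring, hyy, hxx]
      have key : ((r ^ 2/3/(p 1) + (1 - r ^ 2)/3/(p 1)) * ((1 - r ^ 2)/3/(p 1))
          - (1 - r ^ 2) * (r ^ 2) * ((1/3/(p 1)) * (1/3/(p 1))) : ℝ)
          = (1/2 + Real.sqrt (4 * r ^ 2 - 3 * r ^ 4) / (4 - 2 * r ^ 2)) *
            (1/2 - Real.sqrt (4 * r ^ 2 - 3 * r ^ 4) / (4 - 2 * r ^ 2)) := by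
        rw [hp1]
        obtain ⟨S, hSeq⟩ : ∃ S, Real.sqrt (4 * r ^ 2 - 3 * r ^ 4) = S := ⟨_, rfl⟩
        rw [hSeq]
        have hs : S ^ 2 = 4 * r ^ 2 - 3 * r ^ 4 := by
          rw [← hSeq]; exact Real.sq_sqrt (by nlinarith)
        have h1 : (2:ℝ) - r ^ 2 ≠ 0 := by
          have : (1:ℝ) ≤ 2 - r ^ 2 := by linarith
          linarith
        have h2 : (4:ℝ) - 2 * r ^ 2 ≠ 0 := by
          have : (2:ℝ) ≤ 4 - 2 * r ^ 2 := by linarith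
          linarith
        field_simp
        have h3 : (4:ℝ) - r ^ 2 * 2 ≠ 0 := by linarith
        field_simp
        linear_combination (4 * (2 - r ^ 2) ^ 2 : ℝ) * hs
      exact_mod_cast key
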